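/- Let G be a group and let n, k be positive integers with 1 ≤ k ≤ n. Every element of N_{n,k}(G) can be written in the form a_k^{4^{n-k}} · a_{k+1}^{4^{n-k-1}} ⋯ a_{n-1}^{4} · a_n for suitable elements a_j ∈ γ_j(G) (k ≤ j ≤ n). -/

import Mathlib

/-- `H^m`: the subgroup generated by the `m`-th powers of elements of `H`. -/
def sPow {G : Type*} [Group G] (H : Subgroup G) (m : ℕ) : Subgroup G :=
  Subgroup.closure ((fun h => h ^ m) '' (H : Set G))

/-- `γ_n(G)`, the lower central series indexed so that `γ_1(G) = G`. -/
def gamma (G : Type*) [Group G] (n : ℕ) : Subgroup G :=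
  (⊤ : Subgroup G).lowerCentralSeries (n - 1)

/-- `N_{n,k}(G) = γ_k(G)^{4^{n-k}} ⋯ γ_n(G)` (product of normal subgroups = join). -/
def Nnk (G : Type*) [Group G] (n k : ℕ) : Subgroup G :=
  ⨆ i ∈ Finset.Icc k n, sPow (gamma G i) (4 ^ (n - i))

/-- The `λ̄`-series: `λ̄_1(G) = G`, `λ̄_{n+1}(G) = λ̄_n(G)^4 [λ̄_n(G), G]`. -/
def lambdaBar (G : Type*) [Group G] : ℕ → Subgroup G
  | 0 => ⊤
  | 1 => ⊤
  | (n + 2) => sPow (lambdaBar G (n + 1)) 4 ⊔ ⁅lambdaBar G (n + 1), (⊤ : Subgroup G)⁆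

/-- The lower `p`-central series: `λ_1(G) = G`, `λ_{n+1}(G) = λ_n(G)^p [λ_n(G), G]`. -/
def lowP (G : Type*) [Group G] (p : ℕ) : ℕ → Subgroup G
  | 0 => ⊤
  | 1 => ⊤
  | (n + 2) => sPow (lowP G p (n + 1)) p ⊔ ⁅lowP G p (n + 1), (⊤ : Subgroup G)⁆

/-- `Ω_i(G)`: subgroup generated by elements of order dividing `p^i`. -/
def Omega (G : Type*) [Group G] (p i : ℕ) : Subgroup G :=
  Subgroup.closure {x : G | x ^ p ^ i = 1}

/-- A finite `p`-group is `p`-central if `Ω_1(G) ≤ Z(G)` for odd `p`,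
resp. `Ω_2(G) ≤ Z(G)` for `p = 2`. -/
def IsPCentral (p : ℕ) (G : Type*) [Group G] : Prop :=
  if p = 2 then Omega G 2 2 ≤ Subgroup.center G else Omega G p 1 ≤ Subgroup.center G

instance gamma_normal (G : Type*) [Group G] (n : ℕ) : (gamma G n).Normal :=
  inferInstanceAs ((⊤ : Subgroup G).lowerCentralSeries (n - 1)).Normal

instance sPow_normal {G : Type*} [Group G] (H : Subgroup G) [hH : H.Normal] (m : ℕ) :
    (sPow H m).Normal := by
  constructor
  intro x hx g
  induction hx using Subgroup.closure_induction with
  | mem y hy =>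
    obtain ⟨h, hh, rfl⟩ := hy
    exact Subgroup.subset_closure ⟨g * h * g⁻¹, hH.conj_mem h hh g, by
      simp [conj_pow]⟩
  | one => simpa using (sPow H m).one_mem
  | mul a b _ _ ha hb =>
    have : g * (a * b) * g⁻¹ = (g * a * g⁻¹) * (g * b * g⁻¹) := by group
    rw [this]; exact (sPow H m).mul_mem ha hb
  | inv a _ ha =>
    have : g * a⁻¹ * g⁻¹ = (g * a * g⁻¹)⁻¹ := by group
    rw [this]; exact (sPow H m).inv_mem ha

theorem normal_iSup {G : Type*} [Group G] {ι : Sort*} (f : ι → Subgroup G)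
    (h : ∀ i, (f i).Normal) : (⨆ i, f i).Normal := by
  constructor
  intro x hx g
  refine Subgroup.iSup_induction f (C := fun y => g * y * g⁻¹ ∈ ⨆ i, f i) hx
    (fun i y hy => Subgroup.mem_iSup_of_mem i ((h i).conj_mem y hy g)) (by simpa using Subgroup.one_mem (⨆ i, f i)) ?_
  intro a b ha hb
  have : g * (a * b) * g⁻¹ = (g * a * g⁻¹) * (g * b * g⁻¹) := by group
  rw [this]; exact Subgroup.mul_mem _ ha hb

instance Nnk_normal (G : Type*) [Group G] (n k : ℕ) : (Nnk G n k).Normal :=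
  normal_iSup _ fun i => normal_iSup _ fun _ => inferInstance

instance lambdaBar_normal (G : Type*) [Group G] : ∀ n, (lambdaBar G n).Normal
  | 0 => inferInstanceAs (⊤ : Subgroup G).Normal
  | 1 => inferInstanceAs (⊤ : Subgroup G).Normal
  | (n + 2) => by
    haveI := lambdaBar_normal G (n + 1)
    exact inferInstanceAs
      (sPow (lambdaBar G (n + 1)) 4 ⊔ ⁅lambdaBar G (n + 1), (⊤ : Subgroup G)⁆).Normal

instance lowP_normal (G : Type*) [Group G] (p : ℕ) : ∀ n, (lowP G p n).Normal
  | 0 => inferInstanceAs (⊤ : Subgroup G).Normal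
  | 1 => inferInstanceAs (⊤ : Subgroup G).Normal
  | (n + 2) => by
    haveI := lowP_normal G p (n + 1)
    exact inferInstanceAs
      (sPow (lowP G p (n + 1)) p ⊔ ⁅lowP G p (n + 1), (⊤ : Subgroup G)⁆).Normal

open scoped commutatorElement

/-! ### Auxiliary development: power structure of N-series -/

section HPAux

variable {G : Type*} [Group G]

lemma mem_sPow {H : Subgroup G} {h : G} (hh : h ∈ H) (m : ℕ) : h ^ m ∈ sPow H m :=
  Subgroup.subset_closure ⟨h, hh, rfl⟩

lemma sPow_one_eq (H : Subgroup G) : sPow H 1 = H := by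
  apply le_antisymm
  · rw [sPow, Subgroup.closure_le]
    rintro x ⟨h, hh, rfl⟩
    simpa using hh
  · intro x hx
    simpa using mem_sPow hx 1

/-- `Pgrp A s t = A_s^{4^t} A_{s+1}^{4^{t-1}} ⋯ A_{s+t}`. -/
def Pgrp (A : ℕ → Subgroup G) (s t : ℕ) : Subgroup G :=
  ⨆ d ∈ Finset.range (t + 1), sPow (A (s + d)) (4 ^ (t - d))

lemma term_le_Pgrp (A : ℕ → Subgroup G) {s t d : ℕ} (hd : d ≤ t) :
    sPow (A (s + d)) (4 ^ (t - d)) ≤ Pgrp A s t :=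
  le_iSup_of_le d (le_iSup_of_le (Finset.mem_range.mpr (Nat.lt_succ_of_le hd)) le_rfl)

lemma Pgrp_normal (A : ℕ → Subgroup G) (hnorm : ∀ i, (A i).Normal) (s t : ℕ) :
    (Pgrp A s t).Normal :=
  normal_iSup _ fun d => normal_iSup _ fun _ => @sPow_normal G _ _ (hnorm _) _

lemma Pgrp_le_Pgrp (A : ℕ → Subgroup G) {s t s' t' : ℕ}
    (h : ∀ d, d ≤ t → ∃ e, e ≤ t' ∧ s + d = s' + e ∧ t - d = t' - e) :
    Pgrp A s t ≤ Pgrp A s' t' := by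
  refine iSup₂_le fun d hd => ?_
  obtain ⟨e, he, h1, h2⟩ := h d (Nat.lt_succ_iff.mp (Finset.mem_range.mp hd))
  rw [h1, h2]
  exact term_le_Pgrp A he

lemma Pgrp_shift (A : ℕ → Subgroup G) (s t : ℕ) : Pgrp A (s + 1) t ≤ Pgrp A s (t + 1) :=
  Pgrp_le_Pgrp A fun d hd => ⟨d + 1, by omega, by omega, by omega⟩

lemma Pgrp_zero_eq (A : ℕ → Subgroup G) (s : ℕ) : Pgrp A s 0 = A s := by
  apply le_antisymm
  · refine iSup₂_le fun d hd => ?_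
    have hd0 : d = 0 := by
      have := Finset.mem_range.mp hd; omega
    subst hd0
    rw [Nat.sub_zero, pow_zero, sPow_one_eq, Nat.add_zero]
  · intro x hx
    have h0 : x ∈ sPow (A (s + 0)) (4 ^ (0 - 0)) := by
      rw [Nat.sub_zero, pow_zero, sPow_one_eq, Nat.add_zero]; exact hx
    exact term_le_Pgrp A le_rfl h0

lemma mem_iff_quot {T : Subgroup G} [T.Normal] (x : G) :
    x ∈ T ↔ QuotientGroup.mk' T x = 1 :=
  (QuotientGroup.eq_one_iff x).symm

lemma commute_quot {T : Subgroup G} [T.Normal] {a b : G} (h : ⁅a, b⁆ ∈ T) :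
    Commute (QuotientGroup.mk' T a) (QuotientGroup.mk' T b) := by
  rw [← commutatorElement_eq_one_iff_commute, ← map_commutatorElement]
  exact (mem_iff_quot _).mp h

lemma comm_mul_left (x y g : G) : ⁅x * y, g⁆ = x * ⁅y, g⁆ * x⁻¹ * ⁅x, g⁆ := by
  simp only [commutatorElement_def]; group

lemma comm_inv_left (x g : G) : ⁅x⁻¹, g⁆ = x⁻¹ * ⁅x, g⁆⁻¹ * x := by
  simp only [commutatorElement_def]; group

lemma commutator_pow_central {H : Type*} [Group H] (u g : H)
    (hc : ∀ z : H, Commute ⁅u, g⁆ z) (n : ℕ) : ⁅u ^ n, g⁆ = ⁅u, g⁆ ^ n := by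
  obtain ⟨c, hc_def⟩ : ∃ c, c = ⁅u, g⁆ := ⟨_, rfl⟩
  rw [← hc_def] at hc ⊢
  have hug : u * g = c * g * u := by
    rw [hc_def, commutatorElement_def]; group
  have key : ∀ n : ℕ, u ^ n * g = c ^ n * g * u ^ n := by
    intro n
    induction n with
    | zero => simp
    | succ n ih =>
      have hcu : u * c ^ n = c ^ n * u := (((hc u).pow_left n).eq).symm
      calc u ^ (n + 1) * g = u * (u ^ n * g) := by rw [pow_succ']; group
        _ = u * (c ^ n * g * u ^ n) := by rw [ih]
        _ = (u * c ^ n) * (g * u ^ n) := by group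
        _ = (c ^ n * u) * (g * u ^ n) := by rw [hcu]
        _ = c ^ n * (u * g) * u ^ n := by group
        _ = c ^ n * (c * g * u) * u ^ n := by rw [hug]
        _ = c ^ (n + 1) * g * u ^ (n + 1) := by group
  calc ⁅u ^ n, g⁆ = (u ^ n * g) * (u ^ n)⁻¹ * g⁻¹ := by rw [commutatorElement_def]
    _ = (c ^ n * g * u ^ n) * (u ^ n)⁻¹ * g⁻¹ := by rw [key n]
    _ = c ^ n := by group

section Series

variable (A : ℕ → Subgroup G)

/-- The three key statements, proved by simultaneous strong induction on `t`:
commutator of a `4^t`-th power, commutators out of `Pgrp`, and fourth powers of `Pgrp`. -/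
theorem core_triple (hnorm : ∀ i, (A i).Normal)
    (hcomm : ∀ i, ∀ g ∈ A i, ∀ h : G, ⁅g, h⁆ ∈ A (i + 1)) (t : ℕ) :
    (∀ i, ∀ x ∈ A i, ∀ g : G, ⁅x ^ 4 ^ t, g⁆ ∈ Pgrp A (i + 1) t) ∧
    (∀ s, ∀ x ∈ Pgrp A s t, ∀ g : G, ⁅x, g⁆ ∈ Pgrp A (s + 1) t) ∧
    (∀ s, ∀ x ∈ Pgrp A s t, x ^ 4 ∈ Pgrp A s (t + 1)) := by
  induction t using Nat.strong_induction_on with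
  | _ t IH =>
  -- the first statement, `CP`
  have hCP : ∀ i, ∀ x ∈ A i, ∀ g : G, ⁅x ^ 4 ^ t, g⁆ ∈ Pgrp A (i + 1) t := by
    match t, IH with
    | 0, _ =>
      intro i x hx g
      rw [pow_zero, pow_one, Pgrp_zero_eq]
      exact hcomm i x hx g
    | (t' + 1), IH =>
      obtain ⟨ihCP, ihL5, ihL3⟩ := IH t' (Nat.lt_succ_self t')
      intro i x hx g
      haveI : (Pgrp A (i + 1) (t' + 1)).Normal := Pgrp_normal A hnorm _ _
      set π := QuotientGroup.mk' (Pgrp A (i + 1) (t' + 1)) with hπ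
      rw [mem_iff_quot]
      have he : ⁅x ^ 4 ^ t', g⁆ ∈ Pgrp A (i + 1) t' := ihCP i x hx g
      have hmape : π ⁅x ^ 4 ^ t', g⁆ = ⁅(π x) ^ 4 ^ t', π g⁆ := by
        rw [map_commutatorElement, map_pow]
      have hcen : ∀ z, Commute (⁅(π x) ^ 4 ^ t', π g⁆) z := by
        rw [← hmape]
        intro z
        obtain ⟨h, rfl⟩ := QuotientGroup.mk'_surjective _ z
        refine commute_quot ?_
        have h1 : ⁅⁅x ^ 4 ^ t', g⁆, h⁆ ∈ Pgrp A (i + 1 + 1) t' := ihL5 (i + 1) _ he h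
        exact Pgrp_shift A (i + 1) t' h1
      have he4 : ⁅(π x) ^ 4 ^ t', π g⁆ ^ 4 = 1 := by
        rw [← hmape, ← map_pow, ← mem_iff_quot]
        exact ihL3 (i + 1) _ he
      calc π ⁅x ^ 4 ^ (t' + 1), g⁆ = ⁅(π x) ^ 4 ^ (t' + 1), π g⁆ := by
            rw [map_commutatorElement, map_pow]
        _ = ⁅((π x) ^ 4 ^ t') ^ 4, π g⁆ := by rw [← pow_mul, ← pow_succ]
        _ = ⁅(π x) ^ 4 ^ t', π g⁆ ^ 4 := commutator_pow_central _ _ hcen 4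
        _ = 1 := he4
  -- the second statement, `L5`
  have hCPall : ∀ r, r ≤ t → ∀ i, ∀ x ∈ A i, ∀ g : G, ⁅x ^ 4 ^ r, g⁆ ∈ Pgrp A (i + 1) r := by
    intro r hr
    rcases eq_or_lt_of_le hr with h | h
    · subst h; exact hCP
    · exact (IH r h).1
  have hL5 : ∀ s, ∀ x ∈ Pgrp A s t, ∀ g : G, ⁅x, g⁆ ∈ Pgrp A (s + 1) t := by
    intro s x hx
    haveI hM : (Pgrp A (s + 1) t).Normal := Pgrp_normal A hnorm _ _
    refine Subgroup.iSup_induction _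
      (C := fun y => ∀ g : G, ⁅y, g⁆ ∈ Pgrp A (s + 1) t) hx ?_ ?_ ?_
    · intro d y hy
      by_cases hd : d ∈ Finset.range (t + 1)
      · rw [iSup_pos hd] at hy
        have hd' : d ≤ t := Nat.lt_succ_iff.mp (Finset.mem_range.mp hd)
        induction hy using Subgroup.closure_induction with
        | mem z hz =>
          obtain ⟨y0, hy0, rfl⟩ := hz
          intro g
          have h1 : ⁅y0 ^ 4 ^ (t - d), g⁆ ∈ Pgrp A (s + d + 1) (t - d) :=
            hCPall (t - d) (by omega) (s + d) y0 hy0 g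
          refine Pgrp_le_Pgrp A (s' := s + 1) (t' := t) ?_ h1
          intro e he
          exact ⟨d + e, by omega, by omega, by omega⟩
        | one => intro g; simpa using (Pgrp A (s + 1) t).one_mem
        | mul a b _ _ ha hb =>
          intro g
          rw [comm_mul_left]
          exact mul_mem (by simpa [mul_assoc] using hM.conj_mem _ (hb g) a) (ha g)
        | inv a _ ha =>
          intro g
          rw [comm_inv_left]
          have := hM.conj_mem _ (inv_mem (ha g)) a⁻¹
          simpa [mul_assoc] using this
      · rw [iSup_neg hd] at hy
        have hy1 : y = 1 := by simpa [Subgroup.mem_bot] using hy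
        subst hy1
        intro g; simpa using (Pgrp A (s + 1) t).one_mem
    · intro g; simpa using (Pgrp A (s + 1) t).one_mem
    · intro a b ha hb g
      rw [comm_mul_left]
      exact mul_mem (by simpa [mul_assoc] using hM.conj_mem _ (hb g) a) (ha g)
  -- the third statement, `L3`
  refine ⟨hCP, hL5, ?_⟩
  intro s x hx
  haveI hT : (Pgrp A s (t + 1)).Normal := Pgrp_normal A hnorm _ _
  let S : Subgroup G :=
  { carrier := {x : G | x ∈ Pgrp A s t ∧ x ^ 4 ∈ Pgrp A s (t + 1)}
    one_mem' := ⟨one_mem _, by simpa using (Pgrp A s (t + 1)).one_mem⟩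
    mul_mem' := by
      rintro a b ⟨ha1, ha4⟩ ⟨hb1, hb4⟩
      refine ⟨mul_mem ha1 hb1, ?_⟩
      rw [mem_iff_quot]
      have hcom : Commute (QuotientGroup.mk' (Pgrp A s (t + 1)) a)
          (QuotientGroup.mk' (Pgrp A s (t + 1)) b) := by
        refine commute_quot ?_
        have h1 : ⁅a, b⁆ ∈ Pgrp A (s + 1) t := hL5 s a ha1 b
        exact Pgrp_shift A s t h1
      rw [map_pow, map_mul, hcom.mul_pow, ← map_pow, ← map_pow,
        (mem_iff_quot _).mp ha4, (mem_iff_quot _).mp hb4, one_mul]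
    inv_mem' := by
      rintro a ⟨ha1, ha4⟩
      exact ⟨inv_mem ha1, by rw [inv_pow]; exact inv_mem ha4⟩ }
  suffices hle : Pgrp A s t ≤ S from (hle hx).2
  refine iSup₂_le fun d hd => ?_
  have hd' : d ≤ t := Nat.lt_succ_iff.mp (Finset.mem_range.mp hd)
  rw [sPow, Subgroup.closure_le]
  rintro _ ⟨y, hy, rfl⟩
  refine ⟨term_le_Pgrp A hd' (mem_sPow hy _), ?_⟩
  have hpow : (y ^ 4 ^ (t - d)) ^ 4 = y ^ 4 ^ (t + 1 - d) := by
    have he : t + 1 - d = (t - d) + 1 := by omega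
    rw [he, pow_succ 4 (t - d), pow_mul y (4 ^ (t - d)) 4]
  rw [hpow]
  exact term_le_Pgrp A (show d ≤ t + 1 by omega) (mem_sPow hy _)

/-- Hall–Petrescu style statement for fourth-power towers. -/
theorem hp_pow (hnorm : ∀ i, (A i).Normal)
    (hcomm : ∀ i, ∀ g ∈ A i, ∀ h : G, ⁅g, h⁆ ∈ A (i + 1)) (t : ℕ) :
    ∀ s, ∀ a ∈ A s, ∀ b ∈ A s,
      a ^ 4 ^ (t + 1) * b ^ 4 ^ (t + 1) * ((a * b) ^ 4 ^ (t + 1))⁻¹ ∈ Pgrp A (s + 1) t := by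
  induction t with
  | zero =>
    intro s a ha b hb
    haveI : (Pgrp A (s + 1) 0).Normal := Pgrp_normal A hnorm _ _
    rw [mem_iff_quot]
    have hab : Commute (QuotientGroup.mk' (Pgrp A (s + 1) 0) a)
        (QuotientGroup.mk' (Pgrp A (s + 1) 0) b) := by
      refine commute_quot ?_
      rw [Pgrp_zero_eq]
      exact hcomm s a ha b
    simp only [map_mul, map_pow, map_inv]
    rw [hab.mul_pow]
    group
  | succ t ih =>
    intro s a ha b hb
    obtain ⟨hCP1, _, _⟩ := core_triple A hnorm hcomm (t + 1)
    obtain ⟨_, hL5, hL3⟩ := core_triple A hnorm hcomm t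
    haveI hTn : (Pgrp A (s + 1) (t + 1)).Normal := Pgrp_normal A hnorm _ _
    haveI hKn : (Pgrp A (s + 1) t).Normal := Pgrp_normal A hnorm _ _
    set m := 4 ^ (t + 1) with hm
    set π := QuotientGroup.mk' (Pgrp A (s + 1) (t + 1)) with hπ
    set q := (a ^ m * b ^ m)⁻¹ * (a * b) ^ m with hq
    have hqPt : q ∈ Pgrp A (s + 1) t := by
      have herr := ih s a ha b hb
      have hrw : q = ((a * b) ^ m)⁻¹ *
          (a ^ m * b ^ m * ((a * b) ^ m)⁻¹)⁻¹ * ((a * b) ^ m) := by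
        rw [hq]; group
      rw [hrw]
      have := hKn.conj_mem _ (inv_mem herr) (((a * b) ^ m)⁻¹)
      simpa [mul_assoc] using this
    have hq4 : (π q) ^ 4 = 1 := by
      rw [← map_pow, ← mem_iff_quot]
      exact hL3 (s + 1) q hqPt
    have hqc : ∀ z, Commute (π q) z := by
      intro z
      obtain ⟨h, rfl⟩ := QuotientGroup.mk'_surjective _ z
      refine commute_quot ?_
      have h1 : ⁅q, h⁆ ∈ Pgrp A (s + 1 + 1) t := hL5 (s + 1) q hqPt h
      exact Pgrp_shift A (s + 1) t h1
    have hab : Commute (π (a ^ m)) (π (b ^ m)) := by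
      refine commute_quot ?_
      exact hCP1 s a ha (b ^ m)
    have hsplit : (a * b) ^ m = a ^ m * b ^ m * q := by
      rw [hq]; group
    have hexp : (4 : ℕ) ^ (t + 1 + 1) = m * 4 := by
      rw [hm, pow_succ]
    have hab' : Commute (π a ^ m) (π b ^ m) := by simpa [map_pow] using hab
    have hsplit' : (π a * π b) ^ m = π a ^ m * π b ^ m * π q := by
      rw [← map_mul π a b, ← map_pow, hsplit, map_mul, map_mul, map_pow, map_pow]
    rw [mem_iff_quot]
    simp only [map_mul, map_pow, map_inv]
    rw [hexp]
    simp only [pow_mul]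
    rw [hsplit', ((hqc (π a ^ m * π b ^ m)).symm).mul_pow, hab'.mul_pow, hq4, mul_one]
    rw [← hπ]
    group

/-- Splitting off the leading `4^{t+1}`-th power from `Pgrp`. -/
theorem pgrp_split (hnorm : ∀ i, (A i).Normal)
    (hcomm : ∀ i, ∀ g ∈ A i, ∀ h : G, ⁅g, h⁆ ∈ A (i + 1)) (t s : ℕ) :
    ∀ x ∈ Pgrp A s (t + 1), ∃ a ∈ A s, ∃ y ∈ Pgrp A (s + 1) t, x = a ^ 4 ^ (t + 1) * y := by
  haveI hKn : (Pgrp A (s + 1) t).Normal := Pgrp_normal A hnorm _ _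
  set m := 4 ^ (t + 1) with hm
  let S : Subgroup G :=
  { carrier := {x : G | ∃ a ∈ A s, ∃ y ∈ Pgrp A (s + 1) t, x = a ^ m * y}
    one_mem' := ⟨1, one_mem _, 1, one_mem _, by simp⟩
    mul_mem' := by
      rintro x1 x2 ⟨a, ha, y, hy, rfl⟩ ⟨b, hb, z, hz, rfl⟩
      have herr := hp_pow A hnorm hcomm t s a ha b hb
      have hq' : ((a * b) ^ m)⁻¹ * (a ^ m * b ^ m) ∈ Pgrp A (s + 1) t := by
        have hrw : ((a * b) ^ m)⁻¹ * (a ^ m * b ^ m) =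
            ((a * b) ^ m)⁻¹ * (a ^ m * b ^ m * ((a * b) ^ m)⁻¹) * ((a * b) ^ m) := by
          group
        rw [hrw]
        have := hKn.conj_mem _ herr (((a * b) ^ m)⁻¹)
        simpa [mul_assoc, ← hm] using this
      refine ⟨a * b, mul_mem ha hb,
        (((a * b) ^ m)⁻¹ * (a ^ m * b ^ m)) * ((b ^ m)⁻¹ * y * b ^ m) * z, ?_, ?_⟩
      · refine mul_mem (mul_mem hq' ?_) hz
        have := hKn.conj_mem _ hy ((b ^ m)⁻¹)
        simpa [mul_assoc] using this
      · group
    inv_mem' := by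
      rintro x ⟨a, ha, y, hy, rfl⟩
      refine ⟨a⁻¹, inv_mem ha, a ^ m * y⁻¹ * (a ^ m)⁻¹, ?_, ?_⟩
      · exact hKn.conj_mem _ (inv_mem hy) (a ^ m)
      · group }
  intro x hx
  suffices hle : Pgrp A s (t + 1) ≤ S from (hle hx : x ∈ S.carrier)
  refine iSup₂_le fun d hd => ?_
  have hd' : d ≤ t + 1 := Nat.lt_succ_iff.mp (Finset.mem_range.mp hd)
  match d, hd' with
  | 0, _ =>
    rw [sPow, Subgroup.closure_le]
    rintro _ ⟨y0, hy0, rfl⟩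
    exact ⟨y0, by simpa using hy0, 1, one_mem _, by simp [hm]⟩
  | (e + 1), hd' =>
    have hle2 : sPow (A (s + (e + 1))) (4 ^ (t + 1 - (e + 1))) ≤ Pgrp A (s + 1) t := by
      have h1 : s + (e + 1) = s + 1 + e := by omega
      have h2 : t + 1 - (e + 1) = t - e := by omega
      rw [h1, h2]
      exact term_le_Pgrp A (by omega)
    intro y hy
    exact ⟨1, one_mem _, y, hle2 hy, by simp⟩

/-- Normal form for elements of `Pgrp`. -/
theorem pgrp_rep (hnorm : ∀ i, (A i).Normal)
    (hcomm : ∀ i, ∀ g ∈ A i, ∀ h : G, ⁅g, h⁆ ∈ A (i + 1)) :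
    ∀ t s, ∀ x ∈ Pgrp A s t, ∃ a : ℕ → G, (∀ d, d ≤ t → a d ∈ A (s + d)) ∧
      x = ((List.range (t + 1)).map (fun d => a d ^ 4 ^ (t - d))).prod := by
  intro t
  induction t with
  | zero =>
    intro s x hx
    rw [Pgrp_zero_eq] at hx
    refine ⟨fun _ => x, fun d hd => ?_, by simp⟩
    have hd0 : d = 0 := Nat.le_zero.mp hd
    subst hd0
    simpa using hx
  | succ t ihm =>
    intro s x hx
    obtain ⟨b, hb, y, hy, rfl⟩ := pgrp_split A hnorm hcomm t s x hx
    obtain ⟨a', ha', hy'⟩ := ihm (s + 1) y hy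
    refine ⟨fun d => match d with | 0 => b | (e + 1) => a' e, ?_, ?_⟩
    · intro d hd
      match d with
      | 0 => simpa using hb
      | (e + 1) =>
        have := ha' e (by omega)
        have heq : s + 1 + e = s + (e + 1) := by omega
        rwa [heq] at this
    · rw [List.range_succ_eq_map, List.map_cons, List.prod_cons, List.map_map]
      have hfun : ((fun d => (match d with | 0 => b | (e + 1) => a' e) ^ 4 ^ (t + 1 - d))
          ∘ Nat.succ) = fun e => a' e ^ 4 ^ (t - e) := by
        funext e
        simp [Nat.succ_sub_succ]
      rw [hfun, ← hy']
      simp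

end Series

end HPAux

lemma gamma_comm_aux {G : Type*} [Group G] (j : ℕ) (g : G) (hg : g ∈ gamma G j) (h : G) :
    ⁅g, h⁆ ∈ gamma G (j + 1) := by
  cases j with
  | zero => exact Subgroup.mem_top _
  | succ j' =>
    show ⁅g, h⁆ ∈ ⁅(⊤ : Subgroup G).lowerCentralSeries j', (⊤ : Subgroup G)⁆
    exact Subgroup.commutator_mem_commutator hg (Subgroup.mem_top h)

lemma Nnk_le_Pgrp {G : Type*} [Group G] (n k : ℕ) (hk : 1 ≤ k) (hkn : k ≤ n) :
    Nnk G n k ≤ Pgrp (fun i => gamma G (k - 1 + i)) 1 (n - k) := by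
  refine iSup₂_le fun i hi => ?_
  obtain ⟨hki, hin⟩ := Finset.mem_Icc.mp hi
  have h1 : k - 1 + (1 + (i - k)) = i := by omega
  have h2 : n - k - (i - k) = n - i := by omega
  have := term_le_Pgrp (fun i => gamma G (k - 1 + i)) (s := 1) (t := n - k) (d := i - k)
    (by omega)
  rw [h1, h2] at this
  exact this

theorem stmt_4 (G : Type*) [Group G] (n k : ℕ) (hk : 1 ≤ k) (hkn : k ≤ n)
    (x : G) (hx : x ∈ Nnk G n k) :
    ∃ a : ℕ → G, (∀ j, k ≤ j → j ≤ n → a j ∈ gamma G j) ∧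
      x = ((List.range' k (n + 1 - k)).map (fun j => a j ^ 4 ^ (n - j))).prod := by
  set A : ℕ → Subgroup G := fun i => gamma G (k - 1 + i) with hA
  have hnorm : ∀ i, (A i).Normal := fun i => gamma_normal G _
  have hcomm : ∀ i, ∀ g ∈ A i, ∀ h : G, ⁅g, h⁆ ∈ A (i + 1) := by
    intro i g hg h
    have := gamma_comm_aux (k - 1 + i) g hg h
    simpa [hA, add_assoc] using this
  have hxP : x ∈ Pgrp A 1 (n - k) := Nnk_le_Pgrp n k hk hkn hx
  obtain ⟨a', ha', hprod⟩ := pgrp_rep A hnorm hcomm (n - k) 1 x hxP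
  refine ⟨fun j => a' (j - k), ?_, ?_⟩
  · intro j hkj hjn
    have h1 := ha' (j - k) (by omega)
    have he : k - 1 + (1 + (j - k)) = j := by omega
    simp only [hA] at h1
    rwa [he] at h1
  · rw [hprod]
    have hnk : n + 1 - k = n - k + 1 := by omega
    rw [hnk, List.range'_eq_map_range, List.map_map]
    refine congrArg List.prod ?_
    refine List.map_congr_left fun d _ => ?_
    simp only [Function.comp_apply]
    have h1 : k + d - k = d := by omega
    have h2 : n - (k + d) = n - k - d := by omega
    rw [h1, h2]
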